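/- Let E = EuclideanSpace ℝ (Fin d), J : E → ℝ differentiable with L̂-Lipschitz gradient, λ > L̂, V(w) = sup_{θ ∈ E} [J(θ) − (λ/2)‖θ − w‖²], and θ̂(w) the unique global maximizer of θ ↦ J(θ) − (λ/2)‖θ − w‖². Then V is differentiable on E and its gradient satisfies ∇V(w) = λ(θ̂(w) − w) for every w ∈ E. -/

import Mathlib

open InnerProductSpace

local notation "⟪" x ", " y "⟫" => @inner ℝ _ _ x y

/-- Gradient of `θ ↦ J θ - lam/2 * ‖θ - w‖²`. -/
lemma moreau_aux_hasGradientAt {d : ℕ} (J : EuclideanSpace ℝ (Fin d) → ℝ)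
    (hJ : Differentiable ℝ J) (lam : ℝ) (w m : EuclideanSpace ℝ (Fin d)) :
    HasGradientAt (fun θ => J θ - lam / 2 * ‖θ - w‖ ^ 2)
      (gradient J m - lam • (m - w)) m := by
  have h1 : HasFDerivAt J (toDual ℝ _ (gradient J m)) m :=
    (hJ m).hasGradientAt.hasFDerivAt
  have hid : HasFDerivAt (fun θ : EuclideanSpace ℝ (Fin d) => θ - w)
      (ContinuousLinearMap.id ℝ _) m := (hasFDerivAt_id m).sub_const w
  have h2 := ((hid.inner ℝ hid).const_mul (lam / 2))
  have h3 := h1.sub h2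
  rw [hasGradientAt_iff_hasFDerivAt]
  refine (h3.congr_fderiv ?_).congr_of_eventuallyEq (Filter.Eventually.of_forall fun θ => ?_)
  · ext v
    simp [fderivInnerCLM_apply, inner_sub_left, inner_sub_right, real_inner_smul_left,
      real_inner_comm, mul_comm]
    ring
  · show J θ - lam / 2 * ‖θ - w‖ ^ 2 = J θ - lam / 2 * ⟪θ - w, θ - w⟫
    rw [real_inner_self_eq_norm_sq]

/-- Stationarity at the maximizer. -/
lemma moreau_aux_stationary {d : ℕ} (J : EuclideanSpace ℝ (Fin d) → ℝ)
    (hJ : Differentiable ℝ J) (lam : ℝ) (w m : EuclideanSpace ℝ (Fin d))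
    (hmax : ∀ θ, J θ - lam / 2 * ‖θ - w‖ ^ 2 ≤ J m - lam / 2 * ‖m - w‖ ^ 2) :
    gradient J m = lam • (m - w) := by
  have hloc : IsLocalMax (fun θ => J θ - lam / 2 * ‖θ - w‖ ^ 2) m :=
    Filter.Eventually.of_forall hmax
  have h0 := hloc.hasFDerivAt_eq_zero
    (moreau_aux_hasGradientAt J hJ lam w m).hasFDerivAt
  have h1 : gradient J m - lam • (m - w) = 0 := by
    have := congrArg (toDual ℝ (EuclideanSpace ℝ (Fin d))).symm h0
    simpa [gradient] using this
  exact sub_eq_zero.1 h1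

/-- Algebraic identity used for both bounds. -/
lemma moreau_aux_identity {d : ℕ} (lam : ℝ) (θ a w u : EuclideanSpace ℝ (Fin d)) :
    lam / 2 * (‖θ - w‖ ^ 2 - ‖θ - u‖ ^ 2) - ⟪lam • (a - w), u - w⟫
      = lam * ⟪θ - a, u - w⟫ - lam / 2 * ‖u - w‖ ^ 2 := by
  simp only [← real_inner_self_eq_norm_sq, inner_sub_left, inner_sub_right,
    real_inner_smul_left]
  rw [real_inner_comm w θ, real_inner_comm u θ, real_inner_comm u a, real_inner_comm w a,
    real_inner_comm w u]
  ring

/-- Differentiability and gradient formula for the Moreau-envelope value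
`V(w) = sup_θ [J(θ) − (λ/2)‖θ − w‖²]`: namely `∇V(w) = λ(θ̂(w) − w)`. -/
theorem moreau_envelope_differentiable_gradient
    (d : ℕ) (hd : 0 < d)
    (J : EuclideanSpace ℝ (Fin d) → ℝ) (Lhat lam : ℝ)
    (hLhat : 0 ≤ Lhat) (hJ : Differentiable ℝ J)
    (hLip : ∀ x y, ‖gradient J x - gradient J y‖ ≤ Lhat * ‖x - y‖)
    (hlam : Lhat < lam)
    (V : EuclideanSpace ℝ (Fin d) → ℝ)
    (hV : ∀ w, V w = ⨆ θ : EuclideanSpace ℝ (Fin d), (J θ - lam / 2 * ‖θ - w‖ ^ 2))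
    (θhat : EuclideanSpace ℝ (Fin d) → EuclideanSpace ℝ (Fin d))
    (hθhat : ∀ w θ : EuclideanSpace ℝ (Fin d),
      J θ - lam / 2 * ‖θ - w‖ ^ 2 ≤ J (θhat w) - lam / 2 * ‖θhat w - w‖ ^ 2) :
    Differentiable ℝ V ∧
      ∀ w : EuclideanSpace ℝ (Fin d), gradient V w = lam • (θhat w - w) := by
  have hlam0 : 0 < lam := lt_of_le_of_lt hLhat hlam
  set K : ℝ := lam / (lam - Lhat) with hKdef
  have hK1 : 1 ≤ K := by
    rw [hKdef, le_div_iff₀ (by linarith)]; linarith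
  -- stationarity
  have hstat : ∀ w, gradient J (θhat w) = lam • (θhat w - w) := fun w =>
    moreau_aux_stationary J hJ lam w (θhat w) (hθhat w)
  -- Lipschitz property of θhat
  have hLipθ : ∀ u w, ‖θhat u - θhat w‖ ≤ K * ‖u - w‖ := by
    intro u w
    have h1 : lam • (θhat u - θhat w)
        = (gradient J (θhat u) - gradient J (θhat w)) + lam • (u - w) := by
      rw [hstat u, hstat w]; module
    have h2 : lam * ‖θhat u - θhat w‖ ≤ Lhat * ‖θhat u - θhat w‖ + lam * ‖u - w‖ := by
      have h3 : ‖lam • (θhat u - θhat w)‖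
          ≤ ‖gradient J (θhat u) - gradient J (θhat w)‖ + ‖lam • (u - w)‖ := by
        rw [h1]; exact norm_add_le _ _
      rw [norm_smul, norm_smul, Real.norm_eq_abs, abs_of_pos hlam0] at h3
      have := hLip (θhat u) (θhat w)
      linarith
    rw [hKdef, div_mul_eq_mul_div, le_div_iff₀ (by linarith)]
    nlinarith [norm_nonneg (θhat u - θhat w), norm_nonneg (u - w)]
  -- explicit formula for V
  have hVf : ∀ w, V w = J (θhat w) - lam / 2 * ‖θhat w - w‖ ^ 2 := by
    intro w
    rw [hV w]
    refine le_antisymm (ciSup_le (hθhat w)) ?_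
    exact le_ciSup ⟨J (θhat w) - lam / 2 * ‖θhat w - w‖ ^ 2,
      by rintro x ⟨θ, rfl⟩; exact hθhat w θ⟩ (θhat w)
  -- the gradient
  have hgrad : ∀ w, HasGradientAt V (lam • (θhat w - w)) w := by
    intro w
    have hC0 : 0 < lam * K := mul_pos hlam0 (lt_of_lt_of_le one_pos hK1)
    have hbound : ∀ u, |V u - V w - ⟪lam • (θhat w - w), u - w⟫| ≤ lam * K * (‖u - w‖ * ‖u - w‖) := by
      intro u
      have hlow : lam / 2 * (‖θhat w - w‖ ^ 2 - ‖θhat w - u‖ ^ 2) ≤ V u - V w := by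
        have h1 : J (θhat w) - lam / 2 * ‖θhat w - u‖ ^ 2 ≤ V u := by
          rw [hVf u]; exact hθhat u _
        have h2 := hVf w
        linarith
      have hupp : V u - V w ≤ lam / 2 * (‖θhat u - w‖ ^ 2 - ‖θhat u - u‖ ^ 2) := by
        have h1 : J (θhat u) - lam / 2 * ‖θhat u - w‖ ^ 2 ≤ V w := by
          rw [hVf w]; exact hθhat w _
        have h2 := hVf u
        linarith
      have idw := moreau_aux_identity lam (θhat w) (θhat w) w u
      have idu := moreau_aux_identity lam (θhat u) (θhat w) w u
      rw [sub_self, inner_zero_left, mul_zero, zero_sub] at idw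
      have hcs : ⟪θhat u - θhat w, u - w⟫ ≤ ‖θhat u - θhat w‖ * ‖u - w‖ :=
        real_inner_le_norm _ _
      have hθ := hLipθ u w
      have hn2 : (0:ℝ) ≤ ‖u - w‖ := norm_nonneg _
      have hnsq : ‖u - w‖ ^ 2 = ‖u - w‖ * ‖u - w‖ := sq ‖u - w‖
      have s1 : lam / 2 * ‖u - w‖ ^ 2 ≤ lam * K * (‖u - w‖ * ‖u - w‖) := by
        nlinarith [mul_nonneg (sub_nonneg.2 hK1) (mul_nonneg hlam0.le (mul_nonneg hn2 hn2))]
      have s2 : lam * ⟪θhat u - θhat w, u - w⟫ ≤ lam * K * (‖u - w‖ * ‖u - w‖) := by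
        have t1 : ⟪θhat u - θhat w, u - w⟫ ≤ K * ‖u - w‖ * ‖u - w‖ :=
          hcs.trans (mul_le_mul_of_nonneg_right hθ hn2)
        nlinarith [hlam0.le]
      have s3 : (0:ℝ) ≤ lam / 2 * ‖u - w‖ ^ 2 := by positivity
      rw [abs_le]
      constructor
      · linarith
      · linarith
    rw [hasGradientAt_iff_hasFDerivAt, hasFDerivAt_iff_isLittleO,
      Asymptotics.isLittleO_iff]
    intro c hc
    rw [Metric.eventually_nhds_iff]
    refine ⟨c / (lam * K), by positivity, fun {u} hu => ?_⟩
    rw [dist_eq_norm] at hu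
    have h1 := hbound u
    have h2 : ‖V u - V w - (toDual ℝ (EuclideanSpace ℝ (Fin d))) (lam • (θhat w - w)) (u - w)‖
        = |V u - V w - ⟪lam • (θhat w - w), u - w⟫| := by rw [toDual_apply_apply]; rfl
    rw [h2]
    have hn : (0:ℝ) ≤ ‖u - w‖ := norm_nonneg _
    have : lam * K * (‖u - w‖ * ‖u - w‖) ≤ c * ‖u - w‖ := by
      rw [lt_div_iff₀ hC0] at hu
      nlinarith
    calc |V u - V w - ⟪lam • (θhat w - w), u - w⟫|
        ≤ lam * K * (‖u - w‖ * ‖u - w‖) := h1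
      _ ≤ c * ‖u - w‖ := this
  exact ⟨fun w => (hgrad w).hasFDerivAt.differentiableAt,
    fun w => (hgrad w).gradient⟩
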